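/- Let A = (Σ, Q, T, q0, B) be a parametric non-resetting-test timed automaton with one parameter whose set of clocks is X = {x, y}, let C = C_A, and let I(μ) = μ̄ be a parameter interpretation such that A has a parametric run ρ over a timed word (π, τ). Suppose ρ has the form ρ_pref ρ_0 ρ_1 ... ρ_n ρ_suff where, for all 0 ≤ i ≤ n, ρ_i is a one-reset sequence of configurations for the same clock z1 ∈ X, and the initial valuations of all the ρ_i are pairwise in agreement (both under interpretation μ̄, with constant C). Then there exist sequences of configurations ρ'_0, ρ'_1, ..., ρ'_{n'} with n' ≤ |Q| such that ρ_pref ρ'_0 ρ'_1 ... ρ'_{n'} ρ_suff is also a parametric run of A over some timed word with interpretation I(μ) = μ̄. -/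

import Mathlib

/-- Clock constraints over a set of clocks `X`, possibly mentioning one parameter `μ`:
`γ ::= z < c | z = c | z < μ | z = μ | ¬γ | γ ∧ γ`. -/
inductive ClockConstraint (X : Type) : Type where
  | ltC : X → ℕ → ClockConstraint X
  | eqC : X → ℕ → ClockConstraint X
  | ltP : X → ClockConstraint X
  | eqP : X → ClockConstraint X
  | neg : ClockConstraint X → ClockConstraint X
  | conj : ClockConstraint X → ClockConstraint X → ClockConstraint X

namespace ClockConstraint

/-- Satisfaction of a clock constraint by a clock valuation `v`, under parameter value `μ`. -/
def sat {X : Type} (v : X → ℝ) (μ : ℝ) : ClockConstraint X → Prop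
  | ltC z c => v z < (c : ℝ)
  | eqC z c => v z = (c : ℝ)
  | ltP z => v z < μ
  | eqP z => v z = μ
  | neg γ => ¬ sat v μ γ
  | conj γ₁ γ₂ => sat v μ γ₁ ∧ sat v μ γ₂

/-- The set of clocks occurring in a clock constraint. -/
def clocks {X : Type} : ClockConstraint X → Set X
  | ltC z _ => {z}
  | eqC z _ => {z}
  | ltP z => {z}
  | eqP z => {z}
  | neg γ => clocks γ
  | conj γ₁ γ₂ => clocks γ₁ ∪ clocks γ₂

/-- Maximum constant appearing in a clock constraint. -/
def maxConst {X : Type} : ClockConstraint X → ℕ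
  | ltC _ c => c
  | eqC _ c => c
  | ltP _ => 0
  | eqP _ => 0
  | neg γ => maxConst γ
  | conj γ₁ γ₂ => max (maxConst γ₁) (maxConst γ₂)

/-- Does the parameter occur in a constraint? -/
def hasParam {X : Type} : ClockConstraint X → Prop
  | ltP _ => True
  | eqP _ => True
  | neg γ => hasParam γ
  | conj γ₁ γ₂ => hasParam γ₁ ∨ hasParam γ₂
  | _ => False

/-- Does a constant occur in a constraint? -/
def hasConst {X : Type} : ClockConstraint X → Prop
  | ltC _ _ => True
  | eqC _ _ => True
  | neg γ => hasConst γ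
  | conj γ₁ γ₂ => hasConst γ₁ ∨ hasConst γ₂
  | _ => False

end ClockConstraint

/-- A (parametric) timed automaton with states `Q`, alphabet `A`, clocks `X`:
initial state, Büchi acceptance set, and transitions `q --(γ, a, S)--> q'`. -/
structure PTA (Q A X : Type) where
  init : Q
  acc : Set Q
  trans : Set (Q × ClockConstraint X × A × Set X × Q)

/-- A (parametric) TA is a non-resetting-test TA if on every transition the clocks
tested in the guard are disjoint from the reset set. -/
def PTA.IsNrt {Q A X : Type} (M : PTA Q A X) : Prop :=
  ∀ t ∈ M.trans, t.2.1.clocks ∩ t.2.2.2.1 = ∅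

/-- `q, v` is a (parametric) run of `M` over the timed ω-word `(π, τ)` under parameter
value `μ`.  Positions of the word are `1, 2, …`; conventionally `τ 0 = 0`. -/
def IsParamRun {Q A X : Type} (M : PTA Q A X) (μ : ℝ) (π : ℕ → A) (τ : ℕ → ℝ)
    (q : ℕ → Q) (v : ℕ → X → ℝ) : Prop :=
  τ 0 = 0 ∧ (∀ i, 0 ≤ τ i) ∧ (∀ i, 1 ≤ i → τ i < τ (i + 1)) ∧
  q 0 = M.init ∧ (∀ z, v 0 z = 0) ∧
  ∀ i : ℕ, ∃ γ S, (q i, γ, π (i + 1), S, q (i + 1)) ∈ M.trans ∧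
    ClockConstraint.sat (fun z => v i z + (τ (i + 1) - τ i)) μ γ ∧
    ∀ z, (z ∈ S → v (i + 1) z = 0) ∧
         (z ∉ S → v (i + 1) z = v i z + (τ (i + 1) - τ i))

/-- `M` has an accepting (parametric) run over the timed ω-word `(π, τ)` under `μ`:
some accepting state occurs infinitely often along a run. -/
def AcceptsWord {Q A X : Type} (M : PTA Q A X) (μ : ℝ) (π : ℕ → A) (τ : ℕ → ℝ) : Prop :=
  ∃ q v, IsParamRun M μ π τ q v ∧ ∃ qf ∈ M.acc, ∀ n : ℕ, ∃ m, n ≤ m ∧ q m = qf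
/-- A concretely presented parametric TA with `k` clocks: states `Fin (nQ+1)`,
alphabet `Fin (nA+1)`, transitions given by a list. -/
structure ConcretePTA (k : ℕ) where
  nQ : ℕ
  nA : ℕ
  init : Fin (nQ + 1)
  acc : Finset (Fin (nQ + 1))
  trans : List (Fin (nQ + 1) × ClockConstraint (Fin k) × Fin (nA + 1) ×
    Finset (Fin k) × Fin (nQ + 1))

/-- Semantics of a concretely presented automaton. -/
def ConcretePTA.toPTA {k : ℕ} (M : ConcretePTA k) :
    PTA (Fin (M.nQ + 1)) (Fin (M.nA + 1)) (Fin k) where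
  init := M.init
  acc := ↑M.acc
  trans := {t | ∃ tr ∈ M.trans,
    t = (tr.1, tr.2.1, tr.2.2.1, (↑tr.2.2.2.1 : Set (Fin k)), tr.2.2.2.2)}

/-- The maximum constant `C_A` appearing in the guards of the automaton. -/
def ConcretePTA.maxConstant {k : ℕ} (M : ConcretePTA k) : ℕ :=
  (M.trans.map (fun tr => tr.2.1.maxConst)).foldr max 0

/-- If the parameter occurs in a guard, then no constant occurs in that guard. -/
def ConcretePTA.ParamSep {k : ℕ} (M : ConcretePTA k) : Prop :=
  ∀ tr ∈ M.trans, ¬ (tr.2.1.hasParam ∧ tr.2.1.hasConst)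

/-- Two clock valuations are in agreement (w.r.t. constant `C` and parameter value `μ`):
they satisfy the same constraints `z ∼ c` (for `c ≤ 2C`) and `z ∼ μ`, `∼ ∈ {<, =}`. -/
def Agree (C : ℕ) (μ : ℝ) (v w : Fin 2 → ℝ) : Prop :=
  ∀ z : Fin 2,
    (∀ c : ℕ, c ≤ 2 * C →
      ((v z < (c : ℝ) ↔ w z < (c : ℝ)) ∧ (v z = (c : ℝ) ↔ w z = (c : ℝ)))) ∧
    (v z < μ ↔ w z < μ) ∧ (v z = μ ↔ w z = μ)

section ShorteningAux

open ClockConstraint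

private lemma fin2_cases (z1 w : Fin 2) : w = z1 ∨ w = 1 - z1 := by
  fin_cases z1 <;> fin_cases w <;> decide

private lemma clocks_nonempty {X : Type} (γ : ClockConstraint X) : ∃ z, z ∈ γ.clocks := by
  induction γ with
  | ltC z c => exact ⟨z, by simp [ClockConstraint.clocks]⟩
  | eqC z c => exact ⟨z, by simp [ClockConstraint.clocks]⟩
  | ltP z => exact ⟨z, by simp [ClockConstraint.clocks]⟩
  | eqP z => exact ⟨z, by simp [ClockConstraint.clocks]⟩
  | neg γ ih => obtain ⟨z, hz⟩ := ih; exact ⟨z, by simpa [ClockConstraint.clocks] using hz⟩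
  | conj γ₁ γ₂ ih₁ ih₂ =>
    obtain ⟨z, hz⟩ := ih₁
    exact ⟨z, by simp [ClockConstraint.clocks]; exact Or.inl hz⟩

private lemma sat_agree {X : Type} (μ : ℝ) (C : ℕ) :
    ∀ (γ : ClockConstraint X) (u w : X → ℝ),
      γ.maxConst ≤ 2 * C →
      (∀ z ∈ γ.clocks,
        (∀ c : ℕ, c ≤ 2 * C →
          ((u z < (c : ℝ) ↔ w z < (c : ℝ)) ∧ (u z = (c : ℝ) ↔ w z = (c : ℝ)))) ∧
        (u z < μ ↔ w z < μ) ∧ (u z = μ ↔ w z = μ)) →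
      (γ.sat u μ ↔ γ.sat w μ) := by
  intro γ
  induction γ with
  | ltC z c =>
    intro u w hmc h
    simp only [ClockConstraint.sat]
    exact ((h z (by simp [ClockConstraint.clocks])).1 c
      (by simpa [ClockConstraint.maxConst] using hmc)).1
  | eqC z c =>
    intro u w hmc h
    simp only [ClockConstraint.sat]
    exact ((h z (by simp [ClockConstraint.clocks])).1 c
      (by simpa [ClockConstraint.maxConst] using hmc)).2
  | ltP z =>
    intro u w hmc h
    simp only [ClockConstraint.sat]
    exact (h z (by simp [ClockConstraint.clocks])).2.1
  | eqP z =>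
    intro u w hmc h
    simp only [ClockConstraint.sat]
    exact (h z (by simp [ClockConstraint.clocks])).2.2
  | neg γ ih =>
    intro u w hmc h
    simp only [ClockConstraint.sat]
    rw [ih u w (by simpa [ClockConstraint.maxConst] using hmc)
      (fun z hz => h z (by simpa [ClockConstraint.clocks] using hz))]
  | conj γ₁ γ₂ ih₁ ih₂ =>
    intro u w hmc h
    simp only [ClockConstraint.maxConst, max_le_iff] at hmc
    simp only [ClockConstraint.sat]
    rw [ih₁ u w hmc.1 (fun z hz => h z (by simp [ClockConstraint.clocks]; exact Or.inl hz)),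
        ih₂ u w hmc.2 (fun z hz => h z (by simp [ClockConstraint.clocks]; exact Or.inr hz))]

private lemma le_foldr_max (l : List ℕ) : ∀ a ∈ l, a ≤ l.foldr max 0 := by
  induction l with
  | nil => intro a h; exact absurd h List.not_mem_nil
  | cons b l ih =>
    intro a h
    rw [List.foldr_cons]
    rcases List.mem_cons.mp h with h | h
    · subst h; exact le_max_left _ _
    · exact le_trans (ih a h) (le_max_right _ _)

/-- splice a function: keep it before `c`, shift by `D` from `c` on. -/
private def cutF {α : Type} (c D : ℕ) (f : ℕ → α) : ℕ → α :=
  fun t => if t < c then f t else f (t + D)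

private def cutP {α : Type} (c D : ℕ) (f : ℕ → α) : ℕ → α :=
  fun t => if t ≤ c then f t else f (t + D)

private def cutT (c D : ℕ) (K : ℝ) (f : ℕ → ℝ) : ℕ → ℝ :=
  fun t => if t < c then f t else f (t + D) - K

private def cutS (i ji D : ℕ) (s : ℕ → ℕ) : ℕ → ℕ :=
  fun k => if k < i then s k else s (k + ji) - D

private lemma cutF_lt {α : Type} {c D t : ℕ} (f : ℕ → α) (h : t < c) :
    cutF c D f t = f t := if_pos h
private lemma cutF_ge {α : Type} {c D t : ℕ} (f : ℕ → α) (h : c ≤ t) :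
    cutF c D f t = f (t + D) := if_neg (by omega)
private lemma cutP_le {α : Type} {c D t : ℕ} (f : ℕ → α) (h : t ≤ c) :
    cutP c D f t = f t := if_pos h
private lemma cutP_gt {α : Type} {c D t : ℕ} (f : ℕ → α) (h : c < t) :
    cutP c D f t = f (t + D) := if_neg (by omega)
private lemma cutT_lt {c D : ℕ} {K : ℝ} {t : ℕ} (f : ℕ → ℝ) (h : t < c) :
    cutT c D K f t = f t := if_pos h
private lemma cutT_ge {c D : ℕ} {K : ℝ} {t : ℕ} (f : ℕ → ℝ) (h : c ≤ t) :
    cutT c D K f t = f (t + D) - K := if_neg (by omega)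
private lemma cutS_lt {i ji D t : ℕ} (s : ℕ → ℕ) (h : t < i) :
    cutS i ji D s t = s t := if_pos h
private lemma cutS_ge {i ji D t : ℕ} (s : ℕ → ℕ) (h : i ≤ t) :
    cutS i ji D s t = s (t + ji) - D := if_neg (by omega)

end ShorteningAux
private lemma shorten_aux (M : ConcretePTA 2) (hnrt : M.toPTA.IsNrt) (μ : ℝ) (z1 : Fin 2) :
    ∀ n : ℕ, ∀ (π : ℕ → Fin (M.nA + 1)) (τ : ℕ → ℝ)
      (q : ℕ → Fin (M.nQ + 1)) (v : ℕ → Fin 2 → ℝ) (s : ℕ → ℕ),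
      IsParamRun M.toPTA μ π τ q v →
      (∀ i, i ≤ n → s i < s (i + 1)) →
      (∀ i, i ≤ n → v (s i) z1 = 0) →
      (∀ i, i ≤ n → ∀ j, s i ≤ j → j + 1 < s (i + 1) →
        ∀ z, v (j + 1) z = v j z + (τ (j + 1) - τ j)) →
      (∀ i, i ≤ n → ∀ j, j ≤ n → Agree M.maxConstant μ (v (s i)) (v (s j))) →
      ∃ n' : ℕ, n' ≤ M.nQ + 1 ∧
      ∃ (π' : ℕ → Fin (M.nA + 1)) (τ' : ℕ → ℝ)
        (q' : ℕ → Fin (M.nQ + 1)) (v' : ℕ → Fin 2 → ℝ)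
        (s' : ℕ → ℕ) (D : ℕ),
        IsParamRun M.toPTA μ π' τ' q' v' ∧
        (∀ j, j ≤ s 0 → q' j = q j ∧ ∀ z, v' j z = v j z) ∧
        s' 0 = s 0 ∧
        (∀ i, i ≤ n' → s' i < s' (i + 1)) ∧
        s' (n' + 1) + D = s (n + 1) ∧
        (∀ i, i ≤ n' → v' (s' i) z1 = 0) ∧
        (∀ i, i ≤ n' → ∀ j, s' i ≤ j → j + 1 < s' (i + 1) →
          ∀ z, v' (j + 1) z = v' j z + (τ' (j + 1) - τ' j)) ∧
        (∀ j, s (n + 1) ≤ j → q' (j - D) = q j ∧ ∀ z, v' (j - D) z = v j z) := by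
  intro n
  induction n using Nat.strong_induction_on with
  | _ n IH =>
  intro π τ q v s hrun hmono hreset hnoreset hagree
  by_cases hsmall : n ≤ M.nQ + 1
  · exact ⟨n, hsmall, π, τ, q, v, s, 0, hrun,
      fun t _ => ⟨rfl, fun z => rfl⟩, rfl, hmono, by omega, hreset, hnoreset,
      fun t _ => by rw [Nat.sub_zero]; exact ⟨rfl, fun z => rfl⟩⟩
  push_neg at hsmall
  obtain ⟨hτ0, hτnn, hτup, hq0, hv0, hstep⟩ := hrun
  -- time is monotone
  have htle : ∀ a b : ℕ, a ≤ b → τ a ≤ τ b := by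
    intro a b hab
    induction b with
    | zero => have h0 : a = 0 := by omega
              subst h0; exact le_refl _
    | succ b ih =>
      rcases Nat.lt_or_ge a (b + 1) with h | h
      · have h1 : τ a ≤ τ b := ih (by omega)
        have h2 : τ b ≤ τ (b + 1) := by
          rcases Nat.eq_zero_or_pos b with rfl | hb
          · rw [hτ0]; exact hτnn 1
          · exact le_of_lt (hτup b hb)
        exact le_trans h1 h2
      · have h0 : a = b + 1 := by omega
        subst h0; exact le_refl _
  -- clock values are nonnegative
  have hvnn : ∀ t (z : Fin 2), 0 ≤ v t z := by
    intro t
    induction t with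
    | zero => intro z; rw [hv0 z]
    | succ t ih =>
      intro z
      obtain ⟨γ, S, h1, h2, h3⟩ := hstep t
      by_cases hz : z ∈ S
      · rw [(h3 z).1 hz]
      · rw [(h3 z).2 hz]
        have h4 : τ t ≤ τ (t + 1) := htle t (t + 1) (by omega)
        have h5 := ih z
        linarith
  -- block boundaries are monotone
  have smono : ∀ a b, a ≤ b → b ≤ n + 1 → s a ≤ s b := by
    intro a b hab
    induction b with
    | zero => intro _; have h0 : a = 0 := by omega
              subst h0; exact le_refl _
    | succ b ih =>
      intro hb
      rcases Nat.lt_or_ge a (b + 1) with h | h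
      · exact le_trans (ih (by omega) (by omega)) (le_of_lt (hmono b (by omega)))
      · have h0 : a = b + 1 := by omega
        subst h0; exact le_refl _
  have sstrict : ∀ a b, a < b → b ≤ n + 1 → s a < s b := by
    intro a b hab hb
    exact lt_of_lt_of_le (hmono a (by omega)) (smono (a + 1) b (by omega) hb)
  have sge : ∀ k, k ≤ n + 1 → k ≤ s k := by
    intro k
    induction k with
    | zero => intro _; exact Nat.zero_le _
    | succ k ih =>
      intro h
      have h1 := ih (by omega)
      have h2 := hmono k (by omega)
      omega
  -- valuations inside a block evolve by pure time elapse
  have hblock : ∀ k, k ≤ n → ∀ t, s k ≤ t → t < s (k + 1) →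
      ∀ z, v t z = v (s k) z + (τ t - τ (s k)) := by
    intro k hk t
    induction t with
    | zero =>
      intro h1 h2 z
      have h0 : s k = 0 := by omega
      rw [h0]; ring
    | succ t ih =>
      intro h1 h2 z
      rcases Nat.lt_or_ge (s k) (t + 1) with h | h
      · have hnr := hnoreset k hk t (by omega) h2
        rw [hnr z, ih (by omega) (by omega) z]; ring
      · have h0 : s k = t + 1 := by omega
        rw [h0]; ring
  -- pigeonhole: two equal block-entry states
  obtain ⟨x, y, hxy, hfxy⟩ :=
    Fintype.exists_ne_map_eq_of_card_lt
      (fun k : Fin (M.nQ + 2) => q (s (k.val + 1)))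
      (by simp only [Fintype.card_fin]; omega)
  have hxyval : x.val ≠ y.val := fun h => hxy (Fin.ext h)
  obtain ⟨i, j, hi1, hij, hjn, hqij⟩ :
      ∃ i j, 1 ≤ i ∧ i < j ∧ j ≤ n ∧ q (s i) = q (s j) := by
    rcases Nat.lt_or_ge x.val y.val with h | h
    · exact ⟨x.val + 1, y.val + 1, by omega, by omega,
        by have := y.isLt; omega, hfxy⟩
    · have h' : y.val < x.val := by omega
      exact ⟨y.val + 1, x.val + 1, by omega, by omega,
        by have := x.isLt; omega, hfxy.symm⟩
  have hin : i ≤ n := by omega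
  have hsi1 : 1 ≤ s i := le_trans hi1 (sge i (by omega))
  have hsij : s i ≤ s j := smono i j (by omega) (by omega)
  set D := s j - s i with hDdef
  have hsiDeq : s i + D = s j := by omega
  set d : ℝ := v (s j) (1 - z1) - v (s i) (1 - z1) with hddef
  -- z2 = 1 - z1 is nondecreasing along block starts (indices ≥ 1)
  have hstepb : ∀ k, 1 ≤ k → k + 1 ≤ n → v (s k) (1 - z1) ≤ v (s (k + 1)) (1 - z1) := by
    intro k hk1 hkn
    have hs2 : 2 ≤ s (k + 1) := le_trans (by omega) (sge (k + 1) (by omega))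
    have hp : s (k + 1) - 1 + 1 = s (k + 1) := by omega
    obtain ⟨γ, S, h1, h2, h3⟩ := hstep (s (k + 1) - 1)
    rw [hp] at h1 h2 h3
    have hz1S : z1 ∈ S := by
      by_contra hns
      have he := (h3 z1).2 hns
      have h0 : v (s (k + 1)) z1 = 0 := hreset (k + 1) (by omega)
      have hlt : τ (s (k + 1) - 1) < τ (s (k + 1)) := by
        have h5 := hτup (s (k + 1) - 1) (by omega)
        rwa [hp] at h5
      have h6 := hvnn (s (k + 1) - 1) z1
      linarith
    have hz2S : (1 - z1 : Fin 2) ∉ S := by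
      intro hz2S
      obtain ⟨w, hw⟩ := clocks_nonempty γ
      have hempty : γ.clocks ∩ S = ∅ := hnrt _ h1
      have hwS : w ∈ S := by
        rcases fin2_cases z1 w with h | h
        · rwa [h]
        · rwa [h]
      have hmem : w ∈ γ.clocks ∩ S := ⟨hw, hwS⟩
      rw [hempty] at hmem; exact hmem
    have he := (h3 (1 - z1)).2 hz2S
    have hint : v (s (k + 1) - 1) (1 - z1) =
        v (s k) (1 - z1) + (τ (s (k + 1) - 1) - τ (s k)) :=
      hblock k (by omega) (s (k + 1) - 1)
        (by have := hmono k (by omega); omega) (by omega) (1 - z1)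
    have ht1 : τ (s k) ≤ τ (s (k + 1) - 1) :=
      htle _ _ (by have := hmono k (by omega); omega)
    have ht2 : τ (s (k + 1) - 1) ≤ τ (s (k + 1)) := htle _ _ (by omega)
    linarith
  have hchain : ∀ a, 1 ≤ a → ∀ b, a ≤ b → b ≤ n → v (s a) (1 - z1) ≤ v (s b) (1 - z1) := by
    intro a ha b
    induction b with
    | zero => intro hab _; exact absurd hab (by omega)
    | succ b ih =>
      intro hab hbn
      rcases Nat.lt_or_ge a (b + 1) with h | h
      · have h1 := ih (by omega) (by omega)
        have h2 := hstepb b (by omega) (by omega)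
        linarith
      · have h0 : a = b + 1 := by omega
        subst h0; exact le_refl _
  have hd0 : 0 ≤ d := by
    have h1 := hchain i hi1 j (by omega) (by omega)
    rw [hddef]; linarith
  set K : ℝ := τ (s j) - (τ (s i) + d) with hKdef
  -- the new run
  have hrun₁ : IsParamRun M.toPTA μ (cutP (s i) D π) (cutT (s i) D K τ)
      (cutF (s i) D q) (cutF (s i) D v) := by
    refine ⟨?_, ?_, ?_, ?_, ?_, ?_⟩
    · rw [cutT_lt τ (show 0 < s i by omega)]; exact hτ0
    · intro t
      by_cases h : t < s i
      · rw [cutT_lt τ h]; exact hτnn t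
      · rw [cutT_ge τ (show s i ≤ t by omega)]
        have h1 : τ (s j) ≤ τ (t + D) := htle _ _ (by omega)
        have h2 : 0 ≤ τ (s i) := hτnn _
        rw [hKdef]; linarith
    · intro t ht
      rcases Nat.lt_trichotomy (t + 1) (s i) with h | h | h
      · rw [cutT_lt τ h, cutT_lt τ (show t < s i by omega)]; exact hτup t ht
      · rw [cutT_lt τ (show t < s i by omega), cutT_ge τ (show s i ≤ t + 1 by omega)]
        rw [show t + 1 + D = s j from by omega, hKdef]
        have h5 := hτup t ht
        rw [h] at h5
        linarith
      · rw [cutT_ge τ (show s i ≤ t by omega), cutT_ge τ (show s i ≤ t + 1 by omega)]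
        rw [show t + 1 + D = t + D + 1 from by omega]
        have h5 := hτup (t + D) (by omega)
        linarith
    · rw [cutF_lt q (show 0 < s i by omega)]; exact hq0
    · intro z; rw [cutF_lt v (show 0 < s i by omega)]; exact hv0 z
    · intro t
      rcases Nat.lt_trichotomy (t + 1) (s i) with hc | hc | hc
      · -- before the splice
        obtain ⟨γ, S, h1, h2, h3⟩ := hstep t
        refine ⟨γ, S, ?_, ?_, ?_⟩
        · rw [cutF_lt q (show t < s i by omega), cutF_lt q hc,
            cutP_le π (show t + 1 ≤ s i by omega)]
          exact h1
        · have e : (fun z => cutF (s i) D v t z +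
              (cutT (s i) D K τ (t + 1) - cutT (s i) D K τ t))
              = fun z => v t z + (τ (t + 1) - τ t) := by
            funext z
            rw [cutF_lt v (show t < s i by omega), cutT_lt τ hc,
              cutT_lt τ (show t < s i by omega)]
          rw [e]; exact h2
        · intro z
          refine ⟨fun hz => ?_, fun hz => ?_⟩
          · rw [cutF_lt v hc]; exact (h3 z).1 hz
          · rw [cutF_lt v hc, cutF_lt v (show t < s i by omega), cutT_lt τ hc,
              cutT_lt τ (show t < s i by omega)]
            exact (h3 z).2 hz
      · -- the splice step : t + 1 = s i
        obtain ⟨γ, S, h1, h2, h3⟩ := hstep t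
        rw [hc] at h1 h2 h3
        have hnrtg : γ.clocks ∩ S = ∅ := hnrt _ h1
        have hkey : ClockConstraint.sat (fun z => v t z + ((τ (s i) + d) - τ t)) μ γ ∧
            ∀ z : Fin 2, (z ∈ S → v (s j) z = 0) ∧
              (z ∉ S → v (s j) z = v t z + ((τ (s i) + d) - τ t)) := by
          rcases eq_or_lt_of_le hd0 with hd | hd
          · -- d = 0
            have hd' : d = 0 := hd.symm
            have hvij : ∀ z, v (s j) z = v (s i) z := by
              intro z
              rcases fin2_cases z1 z with h | h
              · rw [h, hreset j (by omega), hreset i hin]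
              · rw [h]
                have h9 := hddef
                rw [hd'] at h9
                linarith
            constructor
            · have e : (fun z => v t z + ((τ (s i) + d) - τ t))
                  = fun z => v t z + (τ (s i) - τ t) := by
                funext z; rw [hd']; ring
              rw [e]; exact h2
            · intro z
              refine ⟨fun hz => ?_, fun hz => ?_⟩
              · rw [hvij z]; exact (h3 z).1 hz
              · rw [hvij z, (h3 z).2 hz, hd']; ring
          · -- 0 < d
            have hz1S : z1 ∈ S := by
              by_contra hns
              have he := (h3 z1).2 hns
              have h0 : v (s i) z1 = 0 := hreset i hin
              rcases Nat.eq_zero_or_pos t with rfl | ht1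
              · have hτeq : τ (s i) = τ 0 := by
                  rw [hv0 z1, h0] at he
                  linarith
                have hvz2 : v (s i) (1 - z1) = 0 := by
                  by_cases hz2S : (1 - z1 : Fin 2) ∈ S
                  · exact (h3 (1 - z1)).1 hz2S
                  · have h4 := (h3 (1 - z1)).2 hz2S
                    rw [hv0 (1 - z1)] at h4
                    rw [h4, hτeq]; ring
                have hag := ((hagree i hin j (by omega) (1 - z1)).1 0 (by omega)).2
                rw [Nat.cast_zero] at hag
                have hvj2 : v (s j) (1 - z1) = 0 := hag.mp hvz2
                rw [hddef, hvz2, hvj2] at hd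
                linarith
              · have hlt : τ t < τ (s i) := by
                  have h5 := hτup t ht1
                  rwa [hc] at h5
                have h6 := hvnn t z1
                rw [h0] at he
                linarith
            have hz2S : (1 - z1 : Fin 2) ∉ S := by
              intro hz2S
              obtain ⟨w, hw⟩ := clocks_nonempty γ
              have hwS : w ∈ S := by
                rcases fin2_cases z1 w with h | h
                · rwa [h]
                · rwa [h]
              have hmem : w ∈ γ.clocks ∩ S := ⟨hw, hwS⟩
              rw [hnrtg] at hmem; exact hmem
            have hz1c : z1 ∉ γ.clocks := by
              intro hz1c
              have hmem : z1 ∈ γ.clocks ∩ S := ⟨hz1c, hz1S⟩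
              rw [hnrtg] at hmem; exact hmem
            have hb : v (s i) (1 - z1) = v t (1 - z1) + (τ (s i) - τ t) :=
              (h3 (1 - z1)).2 hz2S
            have hmc : γ.maxConst ≤ 2 * M.maxConstant := by
              obtain ⟨tr, htr, heq⟩ := h1
              have hγ : γ = tr.2.1 := congrArg (fun p => p.2.1) heq
              have h1' : tr.2.1.maxConst ∈ M.trans.map (fun tr => tr.2.1.maxConst) :=
                List.mem_map_of_mem htr
              have h2' : tr.2.1.maxConst ≤ M.maxConstant := le_foldr_max _ _ h1'
              rw [hγ]; omega
            constructor
            · refine (sat_agree μ M.maxConstant γ _ _ hmc ?_).mp h2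
              intro z hz
              have hzz : z = 1 - z1 := by
                rcases fin2_cases z1 z with h | h
                · subst h; exact absurd hz hz1c
                · exact h
              subst hzz
              have e1 : v t (1 - z1) + (τ (s i) - τ t) = v (s i) (1 - z1) := hb.symm
              have e2 : v t (1 - z1) + ((τ (s i) + d) - τ t) = v (s j) (1 - z1) := by
                rw [hddef]; linarith
              simp only [e1, e2]
              exact hagree i hin j (by omega) (1 - z1)
            · intro z
              refine ⟨fun hz => ?_, fun hz => ?_⟩
              · rcases fin2_cases z1 z with h | h
                · rw [h]; exact hreset j (by omega)
                · rw [h] at hz; exact absurd hz hz2S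
              · have hzz : z = 1 - z1 := by
                  rcases fin2_cases z1 z with h | h
                  · subst h; exact absurd hz1S hz
                  · exact h
                subst hzz
                rw [hddef]; linarith
        obtain ⟨hsat', hres'⟩ := hkey
        refine ⟨γ, S, ?_, ?_, ?_⟩
        · rw [cutF_lt q (show t < s i by omega), cutF_ge q (show s i ≤ t + 1 by omega),
            cutP_le π (show t + 1 ≤ s i by omega)]
          rw [show t + 1 + D = s j from by omega, ← hqij, hc]
          exact h1
        · have e : (fun z => cutF (s i) D v t z +
              (cutT (s i) D K τ (t + 1) - cutT (s i) D K τ t))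
              = fun z => v t z + ((τ (s i) + d) - τ t) := by
            funext z
            rw [cutF_lt v (show t < s i by omega), cutT_ge τ (show s i ≤ t + 1 by omega),
              cutT_lt τ (show t < s i by omega),
              show t + 1 + D = s j from by omega, hKdef]
            ring
          rw [e]; exact hsat'
        · intro z
          have hv1 : cutF (s i) D v (t + 1) = v (s j) := by
            rw [cutF_ge v (show s i ≤ t + 1 by omega),
              show t + 1 + D = s j from by omega]
          refine ⟨fun hz => ?_, fun hz => ?_⟩
          · rw [hv1]; exact (hres' z).1 hz
          · rw [hv1, cutF_lt v (show t < s i by omega),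
              cutT_ge τ (show s i ≤ t + 1 by omega),
              cutT_lt τ (show t < s i by omega),
              show t + 1 + D = s j from by omega, hKdef,
              (hres' z).2 hz]
            ring
      · -- after the splice
        have hts : s i ≤ t := by omega
        obtain ⟨γ, S, h1, h2, h3⟩ := hstep (t + D)
        have e1 : t + 1 + D = t + D + 1 := by omega
        refine ⟨γ, S, ?_, ?_, ?_⟩
        · rw [cutF_ge q hts, cutF_ge q (show s i ≤ t + 1 by omega),
            cutP_gt π (show s i < t + 1 by omega), e1]
          exact h1
        · have e : (fun z => cutF (s i) D v t z +
              (cutT (s i) D K τ (t + 1) - cutT (s i) D K τ t))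
              = fun z => v (t + D) z + (τ (t + D + 1) - τ (t + D)) := by
            funext z
            rw [cutF_ge v hts, cutT_ge τ (show s i ≤ t + 1 by omega), cutT_ge τ hts, e1]
            ring
          rw [e]; exact h2
        · intro z
          refine ⟨fun hz => ?_, fun hz => ?_⟩
          · rw [cutF_ge v (show s i ≤ t + 1 by omega), e1]; exact (h3 z).1 hz
          · rw [cutF_ge v (show s i ≤ t + 1 by omega), cutF_ge v hts,
              cutT_ge τ (show s i ≤ t + 1 by omega), cutT_ge τ hts, e1,
              (h3 z).2 hz]
            ring
  -- the new block structure
  set ji := j - i with hjidef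
  set n₁ := n - ji with hn₁def
  have hn₁lt : n₁ < n := by omega
  have hs₁eq : ∀ k, i ≤ k → k + ji ≤ n + 1 →
      cutS i ji D s k + D = s (k + ji) ∧ s i ≤ cutS i ji D s k := by
    intro k hk hkn
    have h1 : s j ≤ s (k + ji) := smono j (k + ji) (by omega) hkn
    have h2 : cutS i ji D s k = s (k + ji) - D := cutS_ge s (by omega)
    omega
  have hmono₁ : ∀ k, k ≤ n₁ → cutS i ji D s k < cutS i ji D s (k + 1) := by
    intro k hk
    rcases Nat.lt_trichotomy (k + 1) i with h | h | h
    · rw [cutS_lt s (show k < i by omega), cutS_lt s h]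
      exact hmono k (by omega)
    · have e2 := hs₁eq (k + 1) (by omega) (by omega)
      have e4 : k + 1 + ji = j := by omega
      rw [e4] at e2
      rw [cutS_lt s (show k < i by omega)]
      have hlt : s k < s i := sstrict k i (by omega) (by omega)
      omega
    · have e1 := hs₁eq k (by omega) (by omega)
      have e2 := hs₁eq (k + 1) (by omega) (by omega)
      have e3 : k + 1 + ji = k + ji + 1 := by omega
      rw [e3] at e2
      have h5 := hmono (k + ji) (by omega)
      omega
  have hv₁s : ∀ k, k ≤ n₁ → ∃ k0, k0 ≤ n ∧
      ∀ z, cutF (s i) D v (cutS i ji D s k) z = v (s k0) z := by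
    intro k hk
    rcases Nat.lt_or_ge k i with h | h
    · refine ⟨k, by omega, fun z => ?_⟩
      rw [cutS_lt s h, cutF_lt v (sstrict k i h (by omega))]
    · obtain ⟨e1, e2⟩ := hs₁eq k h (by omega)
      refine ⟨k + ji, by omega, fun z => ?_⟩
      rw [cutF_ge v e2, e1]
  have hreset₁ : ∀ k, k ≤ n₁ → cutF (s i) D v (cutS i ji D s k) z1 = 0 := by
    intro k hk
    obtain ⟨k0, hk0, he⟩ := hv₁s k hk
    rw [he z1]
    exact hreset k0 hk0
  have hagree₁ : ∀ k, k ≤ n₁ → ∀ l, l ≤ n₁ →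
      Agree M.maxConstant μ (cutF (s i) D v (cutS i ji D s k))
        (cutF (s i) D v (cutS i ji D s l)) := by
    intro k hk l hl
    obtain ⟨k0, hk0, hek⟩ := hv₁s k hk
    obtain ⟨l0, hl0, hel⟩ := hv₁s l hl
    intro z
    rw [hek z, hel z]
    exact hagree k0 hk0 l0 hl0 z
  have hnoreset₁ : ∀ k, k ≤ n₁ → ∀ t, cutS i ji D s k ≤ t → t + 1 < cutS i ji D s (k + 1) →
      ∀ z, cutF (s i) D v (t + 1) z = cutF (s i) D v t z +
        (cutT (s i) D K τ (t + 1) - cutT (s i) D K τ t) := by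
    intro k hk t h1 h2 z
    rcases Nat.lt_or_ge k i with h | h
    · have hub : cutS i ji D s (k + 1) ≤ s i := by
        rcases Nat.lt_trichotomy (k + 1) i with h' | h' | h'
        · rw [cutS_lt s h']; exact smono (k + 1) i (by omega) (by omega)
        · obtain ⟨e1, e2⟩ := hs₁eq (k + 1) (by omega) (by omega)
          have e4 : k + 1 + ji = j := by omega
          rw [e4] at e1
          omega
        · omega
      rw [cutS_lt s h] at h1
      have ht : t + 1 < s i := by omega
      rw [cutF_lt v ht, cutF_lt v (show t < s i by omega), cutT_lt τ ht,
        cutT_lt τ (show t < s i by omega)]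
      apply hnoreset k (by omega) t h1
      rcases Nat.lt_trichotomy (k + 1) i with h' | h' | h'
      · rw [cutS_lt s h'] at h2; exact h2
      · rw [h']; exact ht
      · omega
    · obtain ⟨e1, e2⟩ := hs₁eq k h (by omega)
      obtain ⟨f1, f2⟩ := hs₁eq (k + 1) (by omega) (by omega)
      have e3 : k + 1 + ji = k + ji + 1 := by omega
      rw [e3] at f1
      have ht : s i ≤ t := le_trans e2 h1
      rw [cutF_ge v (show s i ≤ t + 1 by omega), cutF_ge v ht,
        cutT_ge τ (show s i ≤ t + 1 by omega), cutT_ge τ ht,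
        show t + 1 + D = t + D + 1 from by omega,
        hnoreset (k + ji) (by omega) (t + D) (by omega) (by omega) z]
      ring
  -- apply the induction hypothesis to the shortened run
  obtain ⟨n', hn', π₂, τ₂, q₂, v₂, s₂, D₂, hrun₂, hpref₂, hs20, hmono₂, hsD₂,
      hreset₂, hnores₂, hsuf₂⟩ :=
    IH n₁ hn₁lt (cutP (s i) D π) (cutT (s i) D K τ) (cutF (s i) D q)
      (cutF (s i) D v) (cutS i ji D s) hrun₁ hmono₁ hreset₁ hnoreset₁ hagree₁
  have hs10 : cutS i ji D s 0 = s 0 := cutS_lt s (by omega)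
  have hend := hs₁eq (n₁ + 1) (by omega) (by omega)
  rw [show n₁ + 1 + ji = n + 1 from by omega] at hend
  refine ⟨n', hn', π₂, τ₂, q₂, v₂, s₂, D₂ + D, hrun₂, ?_, ?_, hmono₂, ?_,
    hreset₂, hnores₂, ?_⟩
  · intro t htle0
    have h0 : t ≤ cutS i ji D s 0 := by omega
    obtain ⟨ha, hb⟩ := hpref₂ t h0
    have hlt : t < s i := by
      have h5 := sstrict 0 i (by omega) (by omega); omega
    constructor
    · rw [ha, cutF_lt q hlt]
    · intro z; rw [hb z, cutF_lt v hlt]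
  · rw [hs20, hs10]
  · omega
  · intro t htge
    have h1 : D ≤ t := by
      have h2 : s j ≤ s (n + 1) := smono j (n + 1) (by omega) (by omega)
      omega
    have h3 : cutS i ji D s (n₁ + 1) ≤ t - D := by omega
    obtain ⟨ha, hb⟩ := hsuf₂ (t - D) h3
    have h4 : s i ≤ t - D := le_trans hend.2 h3
    have h5 : t - D + D = t := by omega
    have h6 : t - (D₂ + D) = t - D - D₂ := by omega
    constructor
    · rw [h6, ha, cutF_ge q h4, h5]
    · intro z; rw [h6, hb z, cutF_ge v h4, h5]
/-- Lemma (shortening): let `ρ = ρ_pref ρ_0 … ρ_n ρ_suff` be a parametric run of a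
2-clock one-parameter nrtTA, where block `ρ_i` spans positions `[s i, s (i+1))`,
each `ρ_i` is a one-reset sequence for clock `z1` (clock `z1` is `0` at its first
position, and no clock is reset inside the block), and the initial valuations of all
blocks are pairwise in agreement.  Then there is a run `ρ_pref ρ'_0 … ρ'_{n'} ρ_suff`
of the automaton (over some timed word, with the same parameter value) with
`n' ≤ |Q|`, whose middle blocks are again one-reset sequences for `z1`, and whose
prefix and suffix configurations coincide with those of `ρ` (the suffix shifted by
the number `D` of removed positions). -/
theorem run_shortening
    (M : ConcretePTA 2) (hnrt : M.toPTA.IsNrt)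
    (μ : ℝ) (π : ℕ → Fin (M.nA + 1)) (τ : ℕ → ℝ)
    (q : ℕ → Fin (M.nQ + 1)) (v : ℕ → Fin 2 → ℝ)
    (hrun : IsParamRun M.toPTA μ π τ q v)
    (z1 : Fin 2) (n : ℕ) (s : ℕ → ℕ)
    (hmono : ∀ i, i ≤ n → s i < s (i + 1))
    (hreset : ∀ i, i ≤ n → v (s i) z1 = 0)
    (hnoreset : ∀ i, i ≤ n → ∀ j, s i ≤ j → j + 1 < s (i + 1) →
      ∀ z, v (j + 1) z = v j z + (τ (j + 1) - τ j))
    (hagree : ∀ i, i ≤ n → ∀ j, j ≤ n → Agree M.maxConstant μ (v (s i)) (v (s j))) :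
    ∃ n' : ℕ, n' ≤ M.nQ + 1 ∧
      ∃ (π' : ℕ → Fin (M.nA + 1)) (τ' : ℕ → ℝ)
        (q' : ℕ → Fin (M.nQ + 1)) (v' : ℕ → Fin 2 → ℝ)
        (s' : ℕ → ℕ) (D : ℕ),
        IsParamRun M.toPTA μ π' τ' q' v' ∧
        -- the prefix `ρ_pref` (up to the start of `ρ_0`) is unchanged
        (∀ j, j ≤ s 0 → q' j = q j ∧ ∀ z, v' j z = v j z) ∧
        -- the middle consists of blocks `ρ'_0 … ρ'_{n'}`, one-reset sequences for `z1`
        s' 0 = s 0 ∧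
        (∀ i, i ≤ n' → s' i < s' (i + 1)) ∧
        s' (n' + 1) + D = s (n + 1) ∧
        (∀ i, i ≤ n' → v' (s' i) z1 = 0) ∧
        (∀ i, i ≤ n' → ∀ j, s' i ≤ j → j + 1 < s' (i + 1) →
          ∀ z, v' (j + 1) z = v' j z + (τ' (j + 1) - τ' j)) ∧
        -- the suffix `ρ_suff` (from `s (n+1)` on) is unchanged, shifted left by `D`
        (∀ j, s (n + 1) ≤ j → q' (j - D) = q j ∧ ∀ z, v' (j - D) z = v j z) := by
  exact shorten_aux M hnrt μ z1 n π τ q v s hrun hmono hreset hnoreset hagree
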